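/- Fix m ≥ 3 and constants a₂₀, a₁₁ ∈ ℝ, a₀₂ > 0. Consider real unknowns X_k (k = 0,…,m+1), Y_k (k = 0,…,m−1), Z_k (k = 0,…,m) subject to, for k = 0,…,m: X_{k+1} + (k+1)(m−k)Y_k + k a₂₀ Z_k + (m−k)a₁₁ Z_{k+1} = Ẽ_k; X_k + mk Y_{k−1} + k a₂₀ Z_{k−1} + m a₁₁ Z_k + (m−k) a₀₂ Z_{k+1} = F̃_k; k(k−1) Y_{k−2} + k a₁₁ Z_{k−1} + (m−k) a₀₂ Z_k = G̃_k, where out-of-range unknowns (negative indices, or indices exceeding the ranges) are interpreted as 0 and Ẽ_k, F̃_k, G̃_k are given real numbers. Then this linear system has a unique solution (X_k, Y_k, Z_k); explicitly, Z₀ = G̃₀/(m a₀₂), Z₁ = (G̃₁ − a₁₁Z₀)/((m−1)a₀₂), Z_{k+2} = (−a₂₀(k+2)Z_k + (k+2)(F̃_{k+1} − Ẽ_k) − k G̃_{k+2})/(a₀₂(2m−k−2)) for k = 0,…,m−2, and then the Y_k and X_k are determined by back-substitution. -/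

import Mathlib

/-- The linear system satisfied by the triple `(X, Y, Z)` of sequences of top-order
coefficients in the inductive step of the realization of a Whitney metric:
`X k` for `k = 0,…,m+1`, `Y k` for `k = 0,…,m−1`, `Z k` for `k = 0,…,m`
(out-of-range values are `0`), subject to the three families of equations for
`k = 0,…,m` with right-hand sides `Et, Ft, Gt`. -/
def SolvesSystem (m : ℕ) (a20 a11 a02 : ℝ) (Et Ft Gt : ℕ → ℝ)
    (X Y Z : ℕ → ℝ) : Prop :=
  (∀ k : ℕ, m + 1 < k → X k = 0) ∧ (∀ k : ℕ, m - 1 < k → Y k = 0) ∧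
  (∀ k : ℕ, m < k → Z k = 0) ∧
  ∀ k : ℕ, k ≤ m →
    (X (k + 1) + ((k : ℝ) + 1) * ((m : ℝ) - k) * Y k + (k : ℝ) * a20 * Z k
        + ((m : ℝ) - k) * a11 * Z (k + 1) = Et k) ∧
    (X k + (m : ℝ) * k * Y (k - 1) + (k : ℝ) * a20 * Z (k - 1) + (m : ℝ) * a11 * Z k
        + ((m : ℝ) - k) * a02 * Z (k + 1) = Ft k) ∧
    ((k : ℝ) * ((k : ℝ) - 1) * Y (k - 2) + (k : ℝ) * a11 * Z (k - 1)
        + ((m : ℝ) - k) * a02 * Z k = Gt k)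

namespace CCAux

/-- The explicit solution for `Z`. -/
noncomputable def Zs (m : ℕ) (a20 a11 a02 : ℝ) (Et Ft Gt : ℕ → ℝ) : ℕ → ℝ
  | 0 => Gt 0 / ((m : ℝ) * a02)
  | 1 => (Gt 1 - a11 * Zs m a20 a11 a02 Et Ft Gt 0) / (((m : ℝ) - 1) * a02)
  | (k+2) =>
    if k + 2 ≤ m then
      (-(a20 * ((k : ℝ) + 2) * Zs m a20 a11 a02 Et Ft Gt k)
        + ((k : ℝ) + 2) * (Ft (k + 1) - Et k) - (k : ℝ) * Gt (k + 2))
        / (a02 * (2 * (m : ℝ) - k - 2))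
    else 0

/-- The explicit solution for `Y`. -/
noncomputable def Ys (m : ℕ) (a20 a11 a02 : ℝ) (Et Ft Gt : ℕ → ℝ) (k : ℕ) : ℝ :=
  if k + 2 ≤ m then
    (Gt (k + 2) - ((k : ℝ) + 2) * a11 * Zs m a20 a11 a02 Et Ft Gt (k + 1)
      - ((m : ℝ) - ((k : ℝ) + 2)) * a02 * Zs m a20 a11 a02 Et Ft Gt (k + 2))
      / (((k : ℝ) + 2) * ((k : ℝ) + 1))
  else if k + 1 = m then
    (Ft (k + 1) - Et k - a20 * Zs m a20 a11 a02 Et Ft Gt k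
      - (k : ℝ) * a11 * Zs m a20 a11 a02 Et Ft Gt (k + 1)) / (((k : ℝ) + 1) * (k : ℝ))
  else 0

/-- The explicit solution for `X`. -/
noncomputable def Xs (m : ℕ) (a20 a11 a02 : ℝ) (Et Ft Gt : ℕ → ℝ) (k : ℕ) : ℝ :=
  if k ≤ m then
    Ft k - (m : ℝ) * k * Ys m a20 a11 a02 Et Ft Gt (k - 1)
      - (k : ℝ) * a20 * Zs m a20 a11 a02 Et Ft Gt (k - 1)
      - (m : ℝ) * a11 * Zs m a20 a11 a02 Et Ft Gt k
      - ((m : ℝ) - k) * a02 * Zs m a20 a11 a02 Et Ft Gt (k + 1)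
  else if k = m + 1 then
    Et m - (m : ℝ) * a20 * Zs m a20 a11 a02 Et Ft Gt m
  else 0

section

variable {m : ℕ} {a20 a11 a02 : ℝ} {Et Ft Gt X Y Z : ℕ → ℝ}

lemma hm3 (hm : 3 ≤ m) : (3 : ℝ) ≤ (m : ℝ) := by exact_mod_cast hm

lemma sol_Z0 (hm : 3 ≤ m) (ha02 : 0 < a02)
    (h : SolvesSystem m a20 a11 a02 Et Ft Gt X Y Z) :
    Z 0 = Gt 0 / ((m : ℝ) * a02) := by
  have hG := (h.2.2.2 0 (by omega)).2.2
  have hM := hm3 hm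
  rw [eq_div_iff (by nlinarith : (m : ℝ) * a02 ≠ 0)]
  push_cast at hG
  linear_combination hG

lemma sol_Z1 (hm : 3 ≤ m) (ha02 : 0 < a02)
    (h : SolvesSystem m a20 a11 a02 Et Ft Gt X Y Z) :
    Z 1 = (Gt 1 - a11 * Z 0) / (((m : ℝ) - 1) * a02) := by
  have hG := (h.2.2.2 1 (by omega)).2.2
  have hM := hm3 hm
  rw [eq_div_iff (by nlinarith : ((m : ℝ) - 1) * a02 ≠ 0)]
  norm_num at hG
  linear_combination hG

lemma sol_Zrec (hm : 3 ≤ m)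
    (h : SolvesSystem m a20 a11 a02 Et Ft Gt X Y Z) (k : ℕ) (hk : k + 2 ≤ m) :
    a02 * (2 * (m : ℝ) - k - 2) * Z (k + 2)
      = -(a20 * ((k : ℝ) + 2) * Z k)
        + ((k : ℝ) + 2) * (Ft (k + 1) - Et k) - (k : ℝ) * Gt (k + 2) := by
  have hE := (h.2.2.2 k (by omega)).1
  have hF := (h.2.2.2 (k + 1) (by omega)).2.1
  have hG := (h.2.2.2 (k + 2) (by omega)).2.2
  have e1 : k + 1 - 1 = k := by omega
  have e2 : k + 2 - 2 = k := by omega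
  have e3 : k + 2 - 1 = k + 1 := by omega
  rw [e1] at hF
  rw [e2, e3] at hG
  push_cast at hF hG hE
  linear_combination ((k : ℝ) + 2) * hF - ((k : ℝ) + 2) * hE - (k : ℝ) * hG

lemma denom_ne (hm : 3 ≤ m) (ha02 : 0 < a02) {k : ℕ} (hk : k + 2 ≤ m) :
    a02 * (2 * (m : ℝ) - k - 2) ≠ 0 := by
  have hM := hm3 hm
  have : (k : ℝ) + 2 ≤ (m : ℝ) := by exact_mod_cast hk
  nlinarith

lemma sol_Z (hm : 3 ≤ m) (ha02 : 0 < a02)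
    (h : SolvesSystem m a20 a11 a02 Et Ft Gt X Y Z) :
    ∀ k, Z k = Zs m a20 a11 a02 Et Ft Gt k := by
  intro k
  induction k using Nat.strong_induction_on with
  | _ k ih =>
    match k, ih with
    | 0, _ =>
      rw [sol_Z0 hm ha02 h, Zs]
    | 1, _ =>
      rw [sol_Z1 hm ha02 h, sol_Z0 hm ha02 h, Zs, Zs]
    | (j+2), ih =>
      by_cases hj : j + 2 ≤ m
      · rw [Zs, if_pos hj, ← ih j (by omega), eq_div_iff (denom_ne hm ha02 hj)]
        linear_combination sol_Zrec hm h j hj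
      · rw [h.2.2.1 (j+2) (by omega), Zs, if_neg hj]

lemma sol_Y (hm : 3 ≤ m) (ha02 : 0 < a02)
    (h : SolvesSystem m a20 a11 a02 Et Ft Gt X Y Z) :
    ∀ k, Y k = Ys m a20 a11 a02 Et Ft Gt k := by
  intro k
  by_cases h1 : k + 2 ≤ m
  · have hG := (h.2.2.2 (k + 2) (by omega)).2.2
    have e2 : k + 2 - 2 = k := by omega
    have e3 : k + 2 - 1 = k + 1 := by omega
    rw [e2, e3] at hG
    push_cast at hG
    rw [Ys, if_pos h1, ← sol_Z hm ha02 h (k + 1), ← sol_Z hm ha02 h (k + 2),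
      eq_div_iff (by positivity : ((k : ℝ) + 2) * ((k : ℝ) + 1) ≠ 0)]
    linear_combination hG
  · by_cases h2 : k + 1 = m
    · have hE := (h.2.2.2 k (by omega)).1
      have hF := (h.2.2.2 (k + 1) (by omega)).2.1
      have e1 : k + 1 - 1 = k := by omega
      rw [e1] at hF
      have hZtop : Z (k + 2) = 0 := h.2.2.1 (k + 2) (by omega)
      rw [hZtop] at hF
      push_cast at hE hF
      have hk2 : (2 : ℝ) ≤ (k : ℝ) := by
        have : 2 ≤ k := by omega
        exact_mod_cast this
      rw [Ys, if_neg h1, if_pos h2, ← sol_Z hm ha02 h k, ← sol_Z hm ha02 h (k + 1),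
        eq_div_iff (by nlinarith : ((k : ℝ) + 1) * (k : ℝ) ≠ 0)]
      linear_combination hF - hE
    · rw [h.2.1 k (by omega), Ys, if_neg h1, if_neg h2]

lemma sol_X (hm : 3 ≤ m) (ha02 : 0 < a02)
    (h : SolvesSystem m a20 a11 a02 Et Ft Gt X Y Z) :
    ∀ k, X k = Xs m a20 a11 a02 Et Ft Gt k := by
  intro k
  by_cases h1 : k ≤ m
  · have hF := (h.2.2.2 k h1).2.1
    rw [Xs, if_pos h1, ← sol_Y hm ha02 h (k - 1), ← sol_Z hm ha02 h (k - 1),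
      ← sol_Z hm ha02 h k, ← sol_Z hm ha02 h (k + 1)]
    linear_combination hF
  · by_cases h2 : k = m + 1
    · subst h2
      have hE := (h.2.2.2 m le_rfl).1
      rw [Xs, if_neg (by omega), if_pos rfl, ← sol_Z hm ha02 h m]
      linear_combination hE
    · rw [h.1 k (by omega), Xs, if_neg h1, if_neg h2]

/-! ### The constructed triple is a solution -/

lemma holdsF (m : ℕ) (a20 a11 a02 : ℝ) (Et Ft Gt : ℕ → ℝ) (k : ℕ) (hk : k ≤ m) :
    Xs m a20 a11 a02 Et Ft Gt k
      + (m : ℝ) * k * Ys m a20 a11 a02 Et Ft Gt (k - 1)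
      + (k : ℝ) * a20 * Zs m a20 a11 a02 Et Ft Gt (k - 1)
      + (m : ℝ) * a11 * Zs m a20 a11 a02 Et Ft Gt k
      + ((m : ℝ) - k) * a02 * Zs m a20 a11 a02 Et Ft Gt (k + 1) = Ft k := by
  rw [Xs, if_pos hk]; ring

lemma holdsG (hm : 3 ≤ m) (ha02 : 0 < a02) (a20 a11 : ℝ) (Et Ft Gt : ℕ → ℝ)
    (k : ℕ) (hk : k ≤ m) :
    (k : ℝ) * ((k : ℝ) - 1) * Ys m a20 a11 a02 Et Ft Gt (k - 2)
      + (k : ℝ) * a11 * Zs m a20 a11 a02 Et Ft Gt (k - 1)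
      + ((m : ℝ) - k) * a02 * Zs m a20 a11 a02 Et Ft Gt k = Gt k := by
  have hM := hm3 hm
  match k with
  | 0 =>
    rw [Zs]
    push_cast
    field_simp
    ring
  | 1 =>
    have h1 : (m : ℝ) * a02 ≠ 0 := by nlinarith
    have h2 : ((m : ℝ) - 1) * a02 ≠ 0 := by nlinarith
    have hz0 : Zs m a20 a11 a02 Et Ft Gt 0 = Gt 0 / ((m : ℝ) * a02) := by rw [Zs]
    have hz1 : Zs m a20 a11 a02 Et Ft Gt 1
        = (Gt 1 - a11 * (Gt 0 / ((m : ℝ) * a02))) / (((m : ℝ) - 1) * a02) := by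
      rw [Zs, hz0]
    norm_num
    rw [hz1, hz0]
    have h3 : (m : ℝ) - 1 ≠ 0 := by linarith
    have h4 : a02 ≠ 0 := ha02.ne'
    have h5 : (m : ℝ) ≠ 0 := by linarith
    field_simp
    ring
  | (j + 2) =>
    have e2 : j + 2 - 2 = j := by omega
    have e3 : j + 2 - 1 = j + 1 := by omega
    rw [e2, e3]
    have hj : j + 2 ≤ m := hk
    rw [Ys, if_pos hj]
    push_cast
    field_simp
    ring

lemma holdsD (hm : 3 ≤ m) (ha02 : 0 < a02) (a20 a11 : ℝ) (Et Ft Gt : ℕ → ℝ)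
    (k : ℕ) (hk : k + 1 ≤ m) :
    (k : ℝ) * ((k : ℝ) + 1) * Ys m a20 a11 a02 Et Ft Gt k
      + a20 * Zs m a20 a11 a02 Et Ft Gt k
      + (k : ℝ) * a11 * Zs m a20 a11 a02 Et Ft Gt (k + 1)
      + ((m : ℝ) - (k : ℝ) - 1) * a02 * Zs m a20 a11 a02 Et Ft Gt (k + 2)
      = Ft (k + 1) - Et k := by
  have hM := hm3 hm
  by_cases h2 : k + 2 ≤ m
  · have hden : a02 * (2 * (m : ℝ) - k - 2) ≠ 0 := denom_ne hm ha02 h2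
    rw [Ys, if_pos h2, Zs, if_pos h2]
    have hk1 : ((k : ℝ) + 2) * ((k : ℝ) + 1) ≠ 0 := by positivity
    have hd2 : (2 * (m : ℝ) - k - 2) ≠ 0 := by
      have : (k : ℝ) + 2 ≤ (m : ℝ) := by exact_mod_cast h2
      linarith
    have h4 : a02 ≠ 0 := ha02.ne'
    field_simp
    ring
  · have hk2 : k + 1 = m := by omega
    have hZtop : Zs m a20 a11 a02 Et Ft Gt (k + 2) = 0 := by
      rw [Zs, if_neg h2]
    rw [Ys, if_neg h2, if_pos hk2, hZtop]
    have hk0 : (2 : ℝ) ≤ (k : ℝ) := by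
      have : 2 ≤ k := by omega
      exact_mod_cast this
    have h1 : ((k : ℝ) + 1) * (k : ℝ) ≠ 0 := by nlinarith
    field_simp
    ring

lemma holdsE (hm : 3 ≤ m) (ha02 : 0 < a02) (a20 a11 : ℝ) (Et Ft Gt : ℕ → ℝ)
    (k : ℕ) (hk : k ≤ m) :
    Xs m a20 a11 a02 Et Ft Gt (k + 1)
      + ((k : ℝ) + 1) * ((m : ℝ) - k) * Ys m a20 a11 a02 Et Ft Gt k
      + (k : ℝ) * a20 * Zs m a20 a11 a02 Et Ft Gt k
      + ((m : ℝ) - k) * a11 * Zs m a20 a11 a02 Et Ft Gt (k + 1) = Et k := by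
  by_cases hkm : k = m
  · subst hkm
    rw [Xs, if_neg (by omega), if_pos rfl]
    ring
  · have hD := holdsD hm ha02 a20 a11 Et Ft Gt k (by omega)
    have hF := holdsF m a20 a11 a02 Et Ft Gt (k + 1) (by omega)
    have e1 : k + 1 - 1 = k := by omega
    rw [e1] at hF
    push_cast at hF
    linear_combination hF - hD

lemma construct_solves (hm : 3 ≤ m) (ha02 : 0 < a02) (a20 a11 : ℝ) (Et Ft Gt : ℕ → ℝ) :
    SolvesSystem m a20 a11 a02 Et Ft Gt (Xs m a20 a11 a02 Et Ft Gt)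
      (Ys m a20 a11 a02 Et Ft Gt) (Zs m a20 a11 a02 Et Ft Gt) := by
  refine ⟨?_, ?_, ?_, ?_⟩
  · intro k hk
    rw [Xs, if_neg (by omega), if_neg (by omega)]
  · intro k hk
    rw [Ys, if_neg (by omega), if_neg (by omega)]
  · intro k hk
    match k, hk with
    | 0, hk => exact absurd hk (by omega)
    | 1, hk => exact absurd hk (by omega)
    | (j + 2), hk => rw [Zs, if_neg (by omega)]
  · intro k hk
    exact ⟨holdsE hm ha02 a20 a11 Et Ft Gt k hk,
      holdsF m a20 a11 a02 Et Ft Gt k hk,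
      holdsG hm ha02 a20 a11 Et Ft Gt k hk⟩

end

end CCAux

/-- For `m ≥ 3` and `a₀₂ > 0` the linear system for the top-order coefficients has a
unique solution, and every solution satisfies the explicit recursion for the `Z k`. -/
theorem mth_order_system_unique_solution
    (m : ℕ) (hm : 3 ≤ m) (a20 a11 a02 : ℝ) (ha02 : 0 < a02) (Et Ft Gt : ℕ → ℝ) :
    (∃! W : (ℕ → ℝ) × (ℕ → ℝ) × (ℕ → ℝ),
      SolvesSystem m a20 a11 a02 Et Ft Gt W.1 W.2.1 W.2.2) ∧
    (∀ X Y Z : ℕ → ℝ, SolvesSystem m a20 a11 a02 Et Ft Gt X Y Z →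
      Z 0 = Gt 0 / ((m : ℝ) * a02) ∧
      Z 1 = (Gt 1 - a11 * Z 0) / (((m : ℝ) - 1) * a02) ∧
      ∀ k : ℕ, k ≤ m - 2 →
        Z (k + 2) = (-(a20 * ((k : ℝ) + 2) * Z k)
            + ((k : ℝ) + 2) * (Ft (k + 1) - Et k) - (k : ℝ) * Gt (k + 2))
          / (a02 * (2 * (m : ℝ) - k - 2))) := by
  constructor
  · refine ⟨⟨CCAux.Xs m a20 a11 a02 Et Ft Gt, CCAux.Ys m a20 a11 a02 Et Ft Gt,
      CCAux.Zs m a20 a11 a02 Et Ft Gt⟩,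
      CCAux.construct_solves hm ha02 a20 a11 Et Ft Gt, ?_⟩
    rintro ⟨X, Y, Z⟩ h
    simp only [Prod.mk.injEq]
    exact ⟨funext (CCAux.sol_X hm ha02 h), funext (CCAux.sol_Y hm ha02 h),
      funext (CCAux.sol_Z hm ha02 h)⟩
  · intro X Y Z h
    refine ⟨CCAux.sol_Z0 hm ha02 h, CCAux.sol_Z1 hm ha02 h, ?_⟩
    intro k hk
    have hk' : k + 2 ≤ m := by omega
    rw [eq_div_iff (CCAux.denom_ne hm ha02 hk')]
    linear_combination CCAux.sol_Zrec hm h k hk'
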